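/- (Correctness of the query algorithm, same component) Let v1, v2 be vertices with P v1 = i and P v2 = i. Then dist_G(v1,v2) equals the minimum of dist_{C_i}(v1,v2) and the infimum over b1, b2 ∈ B(C_i) of dist_{C_i}(v1,b1) + dist_BG(b1,b2) + dist_{C_i}(b2,v2). -/

import Mathlib

open scoped ENNReal

namespace SPQ

variable {V : Type*} {ι : Type*}

/-- The length of a walk: the sum of the weights `w` over its consecutive edges. -/
noncomputable def wlen (w : V → V → ℝ≥0∞) {G : SimpleGraph V} {u v : V} (p : G.Walk u v) : ℝ≥0∞ :=
  (p.darts.map fun d => w d.toProd.1 d.toProd.2).sum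

/-- The shortest-path distance: infimum of lengths of all walks (⊤ if none exists). -/
noncomputable def gdist (G : SimpleGraph V) (w : V → V → ℝ≥0∞) (u v : V) : ℝ≥0∞ :=
  ⨅ p : G.Walk u v, wlen w p

/-- The component `C_i`: the subgraph of `G` induced on `P ⁻¹ {i}`
(as a graph on `V`: edges of `G` with both endpoints mapped to `i` by `P`). -/
def comp (G : SimpleGraph V) (P : V → ι) (i : ι) : SimpleGraph V where
  Adj u v := G.Adj u v ∧ P u = i ∧ P v = i
  symm := ⟨fun _ _ h => ⟨h.1.symm, h.2.2, h.2.1⟩⟩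
  loopless := ⟨fun u h => G.irrefl h.1⟩

/-- The boundary `B(C_i)`: vertices of component `i` having a `G`-neighbor
in a different component. -/
def bdry (G : SimpleGraph V) (P : V → ι) (i : ι) : Set V :=
  {v | P v = i ∧ ∃ u, G.Adj v u ∧ P u ≠ i}

/-- The set `B` of all boundary vertices. -/
def bdryAll (G : SimpleGraph V) (P : V → ι) : Set V :=
  ⋃ i, bdry G P i

/-- The boundary graph `BG`: distinct boundary vertices `b1, b2` are adjacent
iff `P b1 = P b2` or `G.Adj b1 b2`. -/
def BGraph (G : SimpleGraph V) (P : V → ι) : SimpleGraph V where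
  Adj b1 b2 := b1 ≠ b2 ∧ b1 ∈ bdryAll G P ∧ b2 ∈ bdryAll G P ∧ (P b1 = P b2 ∨ G.Adj b1 b2)
  symm := by
    refine ⟨fun u v h => ?_⟩
    refine ⟨h.1.symm, h.2.2.1, h.2.1, ?_⟩
    rcases h.2.2.2 with h' | h'
    · exact Or.inl h'.symm
    · exact Or.inr h'.symm
  loopless := ⟨fun u h => h.1 rfl⟩

open Classical in
/-- The edge weight of the boundary graph:
`wt b1 b2 = dist_{C_{P b1}}(b1, b2)` if `P b1 = P b2`, and `w b1 b2` otherwise. -/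
noncomputable def wt (G : SimpleGraph V) (P : V → ι) (w : V → V → ℝ≥0∞) (b1 b2 : V) : ℝ≥0∞ :=
  if P b1 = P b2 then gdist (comp G P (P b1)) w b1 b2 else w b1 b2

section Aux
variable {G H : SimpleGraph V} {w : V → V → ℝ≥0∞} {u v x : V}

lemma wlen_nil : wlen w (SimpleGraph.Walk.nil : G.Walk u u) = 0 := rfl

lemma wlen_cons {v' : V} (h : G.Adj u v') (p : G.Walk v' x) :
    wlen w (SimpleGraph.Walk.cons h p) = w u v' + wlen w p := by
  simp [wlen]

lemma wlen_append (p : G.Walk u v) (q : G.Walk v x) :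
    wlen w (p.append q) = wlen w p + wlen w q := by
  simp [wlen]

lemma gdist_le (p : G.Walk u v) : gdist G w u v ≤ wlen w p := iInf_le _ p

lemma gdist_self : gdist G w u u = 0 :=
  le_antisymm (by simpa [wlen_nil] using gdist_le (w := w) (SimpleGraph.Walk.nil : G.Walk u u))
    (zero_le)

lemma gdist_adj (h : G.Adj u v) : gdist G w u v ≤ w u v := by
  simpa [wlen_cons, wlen_nil] using
    gdist_le (w := w) (SimpleGraph.Walk.cons h SimpleGraph.Walk.nil)

lemma gdist_triangle : gdist G w u v ≤ gdist G w u x + gdist G w x v := by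
  rw [show gdist G w u x + gdist G w x v
      = ⨅ p : G.Walk u x, ⨅ q : G.Walk x v, wlen w p + wlen w q from by
    rw [gdist, ENNReal.iInf_add]
    exact iInf_congr fun p => by rw [gdist, ENNReal.add_iInf]]
  exact le_iInf fun p => le_iInf fun q => (gdist_le (p.append q)).trans_eq (wlen_append p q)

lemma wlen_mapLe (hle : H ≤ G) (p : H.Walk u v) : wlen w (p.mapLe hle) = wlen w p := by
  induction p with
  | nil => rfl
  | cons h p ih =>
    rw [SimpleGraph.Walk.mapLe, SimpleGraph.Walk.map_cons, wlen_cons, wlen_cons]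
    exact congrArg _ ih

lemma gdist_mono (hle : H ≤ G) : gdist G w u v ≤ gdist H w u v :=
  le_iInf fun p => (gdist_le (p.mapLe hle)).trans_eq (wlen_mapLe hle p)

lemma comp_le {P : V → ι} {i : ι} : comp G P i ≤ G := fun _ _ h => h.1

lemma comp_adj {P : V → ι} {i : ι} {a b : V} :
    (comp G P i).Adj a b ↔ G.Adj a b ∧ P a = i ∧ P b = i := Iff.rfl

lemma mem_bdryAll {P : V → ι} {b : V} (h : b ∈ bdry G P (P b)) : b ∈ bdryAll G P :=
  Set.mem_iUnion.2 ⟨P b, h⟩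

lemma mem_bdry_self {P : V → ι} {b : V} (h : b ∈ bdry G P (P b)) : True := trivial

/-- Per-edge bound: `gdist G w` is at most the boundary-graph weight on BG edges. -/
lemma gdist_le_wt {P : V → ι} {a b : V} (h : (BGraph G P).Adj a b) :
    gdist G w a b ≤ wt G P w a b := by
  by_cases hp : P a = P b
  · rw [wt, if_pos hp]
    exact gdist_mono comp_le
  · rw [wt, if_neg hp]
    exact gdist_adj (h.2.2.2.resolve_left hp)

lemma gdist_le_gdist_BG {P : V → ι} {a b : V} :
    gdist G w a b ≤ gdist (BGraph G P) (wt G P w) a b := by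
  refine le_iInf fun q => ?_
  induction q with
  | nil => simpa [wlen_nil] using (gdist_self (G := G) (w := w)).le
  | @cons a c b h q ih =>
    rw [wlen_cons]
    exact gdist_triangle.trans (add_le_add (gdist_le_wt h) ih)

/-- Same-component boundary vertices: BG distance is at most component distance. -/
lemma gdist_BG_le_comp {P : V → ι} {z b : V} (hz : z ∈ bdry G P (P z))
    (hb : b ∈ bdry G P (P z)) :
    gdist (BGraph G P) (wt G P w) z b ≤ gdist (comp G P (P z)) w z b := by
  by_cases hzb : z = b
  · subst hzb; rw [gdist_self]; exact zero_le
  · have hadj : (BGraph G P).Adj z b :=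
      ⟨hzb, mem_bdryAll hz, Set.mem_iUnion.2 ⟨P z, hb⟩, Or.inl hb.1.symm⟩
    refine (gdist_adj hadj).trans ?_
    rw [wt, if_pos (by rw [hb.1])]

end Aux

section Main
variable {G : SimpleGraph V} {w : V → V → ℝ≥0∞} {P : V → ι} {i : ι}

open SimpleGraph

open Classical in
/-- Key lemma (hard direction): every `G`-walk from `y` to `v2` is at least as long as the
query expression from `y`. -/
lemma key (v2 : V) (h2 : P v2 = i) :
    ∀ {y : V} (q : G.Walk y v2),
      min (if P y = i then gdist (comp G P i) w y v2 else ⊤)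
        (⨅ b1 ∈ bdry G P (P y), ⨅ b2 ∈ bdry G P i,
          gdist (comp G P (P y)) w y b1 + gdist (BGraph G P) (wt G P w) b1 b2 +
            gdist (comp G P i) w b2 v2) ≤ wlen w q := by
  intro y q
  induction q with
  | nil =>
    rw [wlen_nil, if_pos h2]
    exact le_trans (min_le_left _ _) (by rw [gdist_self])
  | @cons y z v2 d q ih =>
    rw [wlen_cons]
    refine le_trans ?_ (add_le_add_right (ih h2) _)
    by_cases hpz : P z = P y
    · -- same component step
      rw [hpz]
      set A := if P y = i then gdist (comp G P i) w z v2 else ⊤ with hA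
      set B := ⨅ b1 ∈ bdry G P (P y), ⨅ b2 ∈ bdry G P i,
          gdist (comp G P (P y)) w z b1 + gdist (BGraph G P) (wt G P w) b1 b2 +
            gdist (comp G P i) w b2 v2 with hB
      have hAle : (if P y = i then gdist (comp G P i) w y v2 else ⊤) ≤ w y z + A := by
        by_cases hyi : P y = i
        · rw [if_pos hyi, hA, if_pos hyi]
          exact gdist_triangle.trans (add_le_add_left
            (gdist_adj (comp_adj.mpr ⟨d, hyi, hpz.trans hyi⟩)) _)
        · rw [if_neg hyi, hA, if_neg hyi, add_top]
      have hBle : (⨅ b1 ∈ bdry G P (P y), ⨅ b2 ∈ bdry G P i,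
          gdist (comp G P (P y)) w y b1 + gdist (BGraph G P) (wt G P w) b1 b2 +
            gdist (comp G P i) w b2 v2) ≤ w y z + B := by
        rw [hB]
        simp only [ENNReal.add_iInf]
        refine le_iInf fun b1 => le_iInf fun hb1 => le_iInf fun b2 => le_iInf fun hb2 => ?_
        refine le_trans (iInf_le_of_le b1 <| iInf_le_of_le hb1 <| iInf_le_of_le b2 <|
          iInf_le _ hb2) ?_
        have : gdist (comp G P (P y)) w y b1 ≤ w y z + gdist (comp G P (P y)) w z b1 :=
          gdist_triangle.trans (add_le_add_left (gdist_adj (comp_adj.mpr ⟨d, rfl, hpz⟩)) _)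
        calc gdist (comp G P (P y)) w y b1 + gdist (BGraph G P) (wt G P w) b1 b2 +
              gdist (comp G P i) w b2 v2
            ≤ (w y z + gdist (comp G P (P y)) w z b1) + gdist (BGraph G P) (wt G P w) b1 b2 +
              gdist (comp G P i) w b2 v2 := by gcongr
          _ = w y z + (gdist (comp G P (P y)) w z b1 + gdist (BGraph G P) (wt G P w) b1 b2 +
              gdist (comp G P i) w b2 v2) := by ring
      calc min _ _ ≤ min (w y z + A) (w y z + B) := min_le_min hAle hBle
        _ = w y z + min A B := by
            rcases le_total A B with h | h
            · rw [min_eq_left h, min_eq_left (add_le_add_right h _)]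
            · rw [min_eq_right h, min_eq_right (add_le_add_right h _)]
    · -- crossing step
      have hyb : y ∈ bdry G P (P y) := ⟨rfl, z, d, hpz⟩
      have hzb : z ∈ bdry G P (P z) := ⟨rfl, y, d.symm, fun h => hpz h.symm⟩
      have hne : y ≠ z := fun h => hpz (by rw [h])
      have hadj : (BGraph G P).Adj y z :=
        ⟨hne, mem_bdryAll hyb, mem_bdryAll hzb, Or.inr d⟩
      have hBGyz : gdist (BGraph G P) (wt G P w) y z ≤ w y z := by
        refine (gdist_adj hadj).trans ?_
        rw [wt, if_neg fun h => hpz h.symm]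
      set U := ⨅ b1 ∈ bdry G P (P y), ⨅ b2 ∈ bdry G P i,
          gdist (comp G P (P y)) w y b1 + gdist (BGraph G P) (wt G P w) b1 b2 +
            gdist (comp G P i) w b2 v2 with hU
      refine le_trans (min_le_right _ _) ?_
      -- show U ≤ w y z + min (T z) (U z)
      have hT : U ≤ w y z + (if P z = i then gdist (comp G P i) w z v2 else ⊤) := by
        by_cases hzi : P z = i
        · rw [if_pos hzi]
          have hz2 : z ∈ bdry G P i := hzi ▸ hzb
          refine le_trans (iInf_le_of_le y <| iInf_le_of_le hyb <| iInf_le_of_le z <|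
            iInf_le _ hz2) ?_
          rw [gdist_self, zero_add]
          exact add_le_add_left hBGyz _
        · rw [if_neg hzi, add_top]; exact le_top
      have hUz : U ≤ w y z + ⨅ b1 ∈ bdry G P (P z), ⨅ b2 ∈ bdry G P i,
          gdist (comp G P (P z)) w z b1 + gdist (BGraph G P) (wt G P w) b1 b2 +
            gdist (comp G P i) w b2 v2 := by
        simp only [ENNReal.add_iInf]
        refine le_iInf fun b1 => le_iInf fun hb1 => le_iInf fun b2 => le_iInf fun hb2 => ?_
        refine le_trans (iInf_le_of_le y <| iInf_le_of_le hyb <| iInf_le_of_le b2 <|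
          iInf_le _ hb2) ?_
        rw [gdist_self, zero_add]
        have h1 : gdist (BGraph G P) (wt G P w) y b2 ≤ w y z +
            (gdist (comp G P (P z)) w z b1 + gdist (BGraph G P) (wt G P w) b1 b2) := by
          calc gdist (BGraph G P) (wt G P w) y b2
              ≤ gdist (BGraph G P) (wt G P w) y z + gdist (BGraph G P) (wt G P w) z b2 :=
                gdist_triangle
            _ ≤ gdist (BGraph G P) (wt G P w) y z + (gdist (BGraph G P) (wt G P w) z b1 +
                gdist (BGraph G P) (wt G P w) b1 b2) := by
                  exact add_le_add_right gdist_triangle _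
            _ ≤ w y z + (gdist (comp G P (P z)) w z b1 + gdist (BGraph G P) (wt G P w) b1 b2) := by
                gcongr
                exact gdist_BG_le_comp hzb hb1
        calc gdist (BGraph G P) (wt G P w) y b2 + gdist (comp G P i) w b2 v2
            ≤ (w y z + (gdist (comp G P (P z)) w z b1 + gdist (BGraph G P) (wt G P w) b1 b2)) +
              gdist (comp G P i) w b2 v2 := add_le_add_left h1 _
          _ = w y z + (gdist (comp G P (P z)) w z b1 + gdist (BGraph G P) (wt G P w) b1 b2 +
              gdist (comp G P i) w b2 v2) := by ring
      rcases le_total (if P z = i then gdist (comp G P i) w z v2 else ⊤)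
        (⨅ b1 ∈ bdry G P (P z), ⨅ b2 ∈ bdry G P i,
          gdist (comp G P (P z)) w z b1 + gdist (BGraph G P) (wt G P w) b1 b2 +
            gdist (comp G P i) w b2 v2) with h | h
      · rw [min_eq_left h]; exact hT
      · rw [min_eq_right h]; exact hUz

end Main

/-- Correctness of the query algorithm, same component: Let `v1, v2` be
vertices with `P v1 = i` and `P v2 = i`. Then `dist_G(v1,v2)` equals the minimum of
`dist_{C_i}(v1,v2)` and the infimum over `b1, b2 ∈ B(C_i)` of
`dist_{C_i}(v1,b1) + dist_BG(b1,b2) + dist_{C_i}(b2,v2)`. -/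
theorem stmt10 {V : Type*} {ι : Type*} [Fintype V] [Fintype ι]
    (G : SimpleGraph V) (w : V → V → ℝ≥0∞)
    (hsymm : ∀ u v, w u v = w v u) (hfin : ∀ u v, G.Adj u v → w u v < ⊤)
    (P : V → ι) (i : ι) (v1 v2 : V) (h1 : P v1 = i) (h2 : P v2 = i) :
    gdist G w v1 v2 =
      min (gdist (comp G P i) w v1 v2)
        (⨅ b1 ∈ bdry G P i, ⨅ b2 ∈ bdry G P i,
          (gdist (comp G P i) w v1 b1 + gdist (BGraph G P) (wt G P w) b1 b2 +
            gdist (comp G P i) w b2 v2)) := by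
  refine le_antisymm (le_min (gdist_mono comp_le) ?_) ?_
  · refine le_iInf fun b1 => le_iInf fun hb1 => le_iInf fun b2 => le_iInf fun hb2 => ?_
    calc gdist G w v1 v2 ≤ gdist G w v1 b1 + gdist G w b1 v2 := gdist_triangle
      _ ≤ gdist G w v1 b1 + (gdist G w b1 b2 + gdist G w b2 v2) :=
          add_le_add_right gdist_triangle _
      _ = gdist G w v1 b1 + gdist G w b1 b2 + gdist G w b2 v2 := (add_assoc _ _ _).symm
      _ ≤ gdist (comp G P i) w v1 b1 + gdist (BGraph G P) (wt G P w) b1 b2 +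
            gdist (comp G P i) w b2 v2 :=
          add_le_add (add_le_add (gdist_mono comp_le) gdist_le_gdist_BG) (gdist_mono comp_le)
  · refine le_iInf fun p => ?_
    have h := key (w := w) v2 h2 (y := v1) p
    rw [h1, if_pos rfl] at h
    exact h

end SPQ
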